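/- For every bipartite quantum channel N_{A'B'→AB}, the von Neumann conditional entropy of the channel is upper bounded by the least output conditional entropy: S[A|B]_N ≤ inf_ψ S(A|RB)_{(id_R⊗N)(ψ)}, where the infimum is over all finite-dimensional reference systems R and all pure states ψ_{RA'B'}. -/

import Mathlib

namespace QIT

open Matrix
open scoped Kronecker ComplexOrder

noncomputable section

/-- Square matrices over `ℂ` indexed by `ι`, the operators on the Hilbert space `ℂ^ι`. -/
abbrev Mat (ι : Type) : Type := Matrix ι ι ℂ

/-- Linear maps between matrix spaces. -/
abbrev MatMap (ι κ : Type) : Type := Mat ι →ₗ[ℂ] Mat κ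

/-- The tensor product `L₁ ⊗ L₂` of two linear maps on matrix spaces, defined entrywise
via matrix units. -/
def tensorMap {ι₁ κ₁ ι₂ κ₂ : Type} [Fintype ι₁] [DecidableEq ι₁] [Fintype ι₂] [DecidableEq ι₂]
    (L₁ : MatMap ι₁ κ₁) (L₂ : MatMap ι₂ κ₂) : MatMap (ι₁ × ι₂) (κ₁ × κ₂) where
  toFun X := Matrix.of fun p q => ∑ k₁, ∑ l₁, ∑ k₂, ∑ l₂,
      X (k₁, k₂) (l₁, l₂) * L₁ (Matrix.single k₁ l₁ 1) p.1 q.1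
        * L₂ (Matrix.single k₂ l₂ 1) p.2 q.2
  map_add' X Y := by
    ext p q
    simp [Matrix.add_apply, add_mul, Finset.sum_add_distrib]
  map_smul' c X := by
    ext p q
    simp [Matrix.smul_apply, smul_eq_mul, Finset.mul_sum, mul_assoc]

/-- A quantum state: positive semidefinite with unit trace. -/
def IsState {ι : Type} [Fintype ι] (ρ : Mat ι) : Prop :=
  ρ.PosSemidef ∧ ρ.trace = 1

/-- Trace preserving linear map. -/
def TracePreserving {ι κ : Type} [Fintype ι] [Fintype κ] (L : MatMap ι κ) : Prop :=
  ∀ X, (L X).trace = X.trace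

/-- Complete positivity: `id_R ⊗ L` preserves positive semidefiniteness for every
finite-dimensional reference system `R`. -/
def IsCP {ι κ : Type} [Fintype ι] [DecidableEq ι] [Fintype κ] (L : MatMap ι κ) : Prop :=
  ∀ (r : ℕ) (X : Mat (Fin r × ι)), X.PosSemidef →
    (tensorMap (LinearMap.id : MatMap (Fin r) (Fin r)) L X).PosSemidef

/-- A quantum channel: completely positive and trace preserving. -/
def IsChannel {ι κ : Type} [Fintype ι] [DecidableEq ι] [Fintype κ] (L : MatMap ι κ) : Prop :=
  IsCP L ∧ TracePreserving L

/-- The completely mixing (depolarizing) map `X ↦ tr(X) · 1`. -/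
def Rmap (ι κ : Type) [Fintype ι] [DecidableEq κ] : MatMap ι κ where
  toFun X := X.trace • (1 : Mat κ)
  map_add' X Y := by simp [Matrix.trace_add, add_smul]
  map_smul' c X := by simp [Matrix.trace_smul, mul_smul]

/-- Partial trace over the first tensor factor. -/
def ptraceLeftMap (ι κ : Type) [Fintype ι] : MatMap (ι × κ) κ where
  toFun X := Matrix.of fun p q => ∑ k, X (k, p) (k, q)
  map_add' X Y := by
    ext p q
    simp [Matrix.add_apply, Finset.sum_add_distrib]
  map_smul' c X := by
    ext p q
    simp [Matrix.smul_apply, smul_eq_mul, Finset.mul_sum]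

/-- The unitary channel of relabeling induced by an equivalence of index types. -/
def reindexMap {ι κ : Type} (e : ι ≃ κ) : MatMap ι κ :=
  (Matrix.reindexLinearEquiv ℂ ℂ e e).toLinearMap

/-- Matrix logarithm (base 2) of a Hermitian matrix, via the spectral decomposition;
junk value `0` on non-Hermitian matrices.  `Real.logb 2 0 = 0` implements the usual
convention on the kernel. -/
def matLog {ι : Type} [Fintype ι] [DecidableEq ι] (ρ : Mat ι) : Mat ι :=
  if h : ρ.IsHermitian then
    (h.eigenvectorUnitary : Mat ι) *
      Matrix.diagonal (fun i => (Real.logb 2 (h.eigenvalues i) : ℂ)) *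
      (h.eigenvectorUnitary : Mat ι)ᴴ
  else 0

/-- `supp ρ ⊆ supp σ`, expressed through kernels. -/
def suppSubset {ι : Type} [Fintype ι] (ρ σ : Mat ι) : Prop :=
  ∀ v : ι → ℂ, σ *ᵥ v = 0 → ρ *ᵥ v = 0

open scoped Classical in

/-- The Umegaki relative entropy `D(ρ‖σ)` (base 2), as an extended real:
`tr (ρ (log ρ − log σ))` if `supp ρ ⊆ supp σ`, and `+∞` otherwise. -/
def relEnt {ι : Type} [Fintype ι] [DecidableEq ι] (ρ σ : Mat ι) : EReal :=
  if suppSubset ρ σ then (((ρ * (matLog ρ - matLog σ)).trace.re : ℝ) : EReal) else ⊤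

/-- The channel divergence induced by the Umegaki relative entropy. -/
def relChDiv {ι κ : Type} [Fintype ι] [DecidableEq ι] [Fintype κ] [DecidableEq κ]
    (N M : MatMap ι κ) : EReal :=
  ⨆ (r : ℕ) (ρ : {ρ : Mat (Fin r × ι) // IsState ρ}),
    relEnt (tensorMap (LinearMap.id : MatMap (Fin r) (Fin r)) N ρ.1)
           (tensorMap (LinearMap.id : MatMap (Fin r) (Fin r)) M ρ.1)

/-- The von Neumann conditional entropy `S[A|B]_N` of a bipartite channel. -/
def vnCondEnt {α' β' α β : Type}
    [Fintype α'] [DecidableEq α'] [Fintype β'] [DecidableEq β']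
    [Fintype α] [DecidableEq α] [Fintype β] [DecidableEq β]
    (N : MatMap (α' × β') (α × β)) : EReal :=
  - ⨅ (M : {M : MatMap β' β // IsChannel M}),
      relChDiv N (tensorMap (Rmap α' α) M.1)

/-- The von Neumann conditional entropy `S(A|B)_ρ = −D(ρ_{AB}‖1_A ⊗ ρ_B)` of a bipartite
state. -/
def vnCondEntState {α β : Type} [Fintype α] [DecidableEq α] [Fintype β] [DecidableEq β]
    (ρ : Mat (α × β)) : EReal :=
  - relEnt ρ ((1 : Mat α) ⊗ₖ (ptraceLeftMap α β ρ))

/-- Pure states: rank-one projections `|v⟩⟨v|`. -/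
def IsPure {ι : Type} (ψ : Mat ι) : Prop :=
  ∃ v : ι → ℂ, ψ = Matrix.vecMulVec v (star v)

/-- The regrouping `R × (A × B) ≃ A × (R × B)`. -/
def swapRA (R A B : Type) : (R × (A × B)) ≃ (A × (R × B)) where
  toFun p := (p.2.1, (p.1, p.2.2))
  invFun p := (p.2.1, (p.1, p.2.2))
  left_inv p := rfl
  right_inv p := rfl

/-- `inf_ψ S(A|RB)_{(id_R ⊗ N)(ψ)}`, the least output conditional entropy of a bipartite
channel, over all finite-dimensional references `R` and pure input states `ψ_{R A'B'}`. -/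
def minOutCondEnt {a' b' a b : ℕ} (N : MatMap (Fin a' × Fin b') (Fin a × Fin b)) : EReal :=
  ⨅ (r : ℕ) (ψ : {ψ : Mat (Fin r × (Fin a' × Fin b')) // IsState ψ ∧ IsPure ψ}),
    vnCondEntState (reindexMap (swapRA (Fin r) (Fin a) (Fin b))
      (tensorMap (LinearMap.id : MatMap (Fin r) (Fin r)) N ψ.1))

section MatLog

variable {ι : Type} [Fintype ι] [DecidableEq ι]

/-- Conjugation by a unitary as an ℝ-algebra homomorphism. -/
def uconj (V : Matrix.unitaryGroup ι ℂ) : Mat ι →ₐ[ℝ] Mat ι where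
  toFun X := (V : Mat ι) * X * (V : Mat ι)ᴴ
  map_one' := by
    show (V : Mat ι) * 1 * (V : Mat ι)ᴴ = 1
    rw [mul_one, ← Matrix.star_eq_conjTranspose]
    exact (Matrix.mem_unitaryGroup_iff).mp V.2
  map_mul' X Y := by
    have h : (V : Mat ι)ᴴ * (V : Mat ι) = 1 := by
      rw [← Matrix.star_eq_conjTranspose]
      exact (Matrix.mem_unitaryGroup_iff').mp V.2
    show (V : Mat ι) * (X * Y) * (V : Mat ι)ᴴ
        = ((V : Mat ι) * X * (V : Mat ι)ᴴ) * ((V : Mat ι) * Y * (V : Mat ι)ᴴ)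
    calc (V : Mat ι) * (X * Y) * (V : Mat ι)ᴴ
        = (V : Mat ι) * X * ((V : Mat ι)ᴴ * (V : Mat ι)) * Y * (V : Mat ι)ᴴ := by
          rw [h, mul_one]; noncomm_ring
      _ = ((V : Mat ι) * X * (V : Mat ι)ᴴ) * ((V : Mat ι) * Y * (V : Mat ι)ᴴ) := by noncomm_ring
  map_zero' := by
    show (V : Mat ι) * 0 * (V : Mat ι)ᴴ = 0
    rw [mul_zero, zero_mul]
  map_add' X Y := by
    show (V : Mat ι) * (X + Y) * (V : Mat ι)ᴴ = _
    simp [Matrix.mul_add, Matrix.add_mul]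
  commutes' r := by
    show (V : Mat ι) * (algebraMap ℝ (Mat ι) r) * (V : Mat ι)ᴴ = _
    have h1 : (V : Mat ι) * (V : Mat ι)ᴴ = 1 := by
      rw [← Matrix.star_eq_conjTranspose]
      exact (Matrix.mem_unitaryGroup_iff).mp V.2
    simp only [Algebra.algebraMap_eq_smul_one]
    rw [Matrix.mul_smul, mul_one, Matrix.smul_mul, h1]

theorem matLog_decomp (V : Mat ι) (hV : V ∈ Matrix.unitaryGroup ι ℂ) (d : ι → ℝ) :
    matLog (V * Matrix.diagonal (fun i => (d i : ℂ)) * Vᴴ)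
      = V * Matrix.diagonal (fun i => ((Real.logb 2 (d i) : ℝ) : ℂ)) * Vᴴ := by
  set A := V * Matrix.diagonal (fun i => (d i : ℂ)) * Vᴴ with hAdef
  have hA : A.IsHermitian := by
    have : Aᴴ = A := by
      rw [hAdef]
      rw [Matrix.conjTranspose_mul, Matrix.conjTranspose_mul,
        Matrix.conjTranspose_conjTranspose, Matrix.diagonal_conjTranspose, Matrix.mul_assoc]
      have hst : (star fun i => ((d i : ℂ))) = fun i => ((d i : ℂ)) := by
        funext i
        simp only [Pi.star_apply, RCLike.star_def, Complex.conj_ofReal]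
      rw [hst]
    exact this
  classical
  set e := hA.eigenvalues with he
  set S : Finset ℝ := (Finset.univ.image d) ∪ (Finset.univ.image e) with hS
  set p : Polynomial ℝ := Lagrange.interpolate S id (Real.logb 2) with hp
  have hevalp : ∀ x ∈ S, p.eval x = Real.logb 2 x := by
    intro x hx
    have := Lagrange.eval_interpolate_at_node (Real.logb 2) (Set.injOn_id _) hx
    exact this
  have key : ∀ (W : Mat ι), W ∈ Matrix.unitaryGroup ι ℂ → ∀ (c : ι → ℝ), (∀ i, c i ∈ S) →
      Polynomial.aeval (W * Matrix.diagonal (fun i => (c i : ℂ)) * Wᴴ) p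
        = W * Matrix.diagonal (fun i => ((Real.logb 2 (c i) : ℝ) : ℂ)) * Wᴴ := by
    intro W hW c hc
    have h1 : W * Matrix.diagonal (fun i => (c i : ℂ)) * Wᴴ
        = uconj ⟨W, hW⟩ (Matrix.diagonalAlgHom ℝ (fun i => (c i : ℂ))) := rfl
    rw [h1, Polynomial.aeval_algHom_apply, Polynomial.aeval_algHom_apply]
    have h2 : Polynomial.aeval (fun i => (c i : ℂ)) p
        = fun i => ((Real.logb 2 (c i) : ℝ) : ℂ) := by
      funext i
      have h3 := Polynomial.aeval_algHom_apply (Pi.evalAlgHom ℝ (fun _ : ι => ℂ) i)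
        (fun j => (c j : ℂ)) p
      have h4 := Polynomial.aeval_algHom_apply Complex.ofRealAm (c i) p
      simp only [Pi.evalAlgHom_apply] at h3
      rw [← h3]
      have hh : ((c i : ℂ)) = Complex.ofRealAm (c i) := rfl
      rw [hh, h4]
      have hae : (Polynomial.aeval (c i)) p = p.eval (c i) := by
        rw [Polynomial.aeval_def, Polynomial.eval₂_eq_eval_map, Algebra.algebraMap_self, Polynomial.map_id]
      rw [hae, hevalp _ (hc i)]
      rfl
    rw [h2]
    rfl
  have hd : ∀ i, d i ∈ S := fun i =>
    Finset.mem_union_left _ (Finset.mem_image_of_mem d (Finset.mem_univ i))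
  have heS : ∀ i, e i ∈ S := fun i =>
    Finset.mem_union_right _ (Finset.mem_image_of_mem e (Finset.mem_univ i))
  have hspec : A = (hA.eigenvectorUnitary : Mat ι) * Matrix.diagonal (fun i => (e i : ℂ))
      * (hA.eigenvectorUnitary : Mat ι)ᴴ := by
    have := hA.spectral_theorem
    rw [Unitary.conjStarAlgAut_apply] at this
    simp only [Unitary.coe_star, Matrix.star_eq_conjTranspose] at this
    exact this
  have h5 := key V hV d hd
  have h6 := key (hA.eigenvectorUnitary : Mat ι) hA.eigenvectorUnitary.2 e heS
  rw [← hspec] at h6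
  rw [← hAdef] at h5
  have hml : matLog A = (hA.eigenvectorUnitary : Mat ι)
      * Matrix.diagonal (fun i => ((Real.logb 2 (e i) : ℝ) : ℂ))
      * (hA.eigenvectorUnitary : Mat ι)ᴴ := dif_pos hA
  rw [hml, ← h6]
  exact h5

theorem matLog_spectral {ρ : Mat ι} (hρ : ρ.IsHermitian) :
    matLog ρ = (hρ.eigenvectorUnitary : Mat ι)
      * Matrix.diagonal (fun i => ((Real.logb 2 (hρ.eigenvalues i) : ℝ) : ℂ))
      * (hρ.eigenvectorUnitary : Mat ι)ᴴ := dif_pos hρ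

end MatLog
section MatLogCor

variable {ι κ : Type} [Fintype ι] [DecidableEq ι] [Fintype κ] [DecidableEq κ]

theorem kron_conjTranspose (A : Mat ι) (B : Mat κ) : (A ⊗ₖ B)ᴴ = Aᴴ ⊗ₖ Bᴴ := by
  ext p q
  simp [Matrix.conjTranspose_apply, Matrix.kroneckerMap_apply]

theorem one_kron_unitary {U : Mat κ} (hU : U ∈ Matrix.unitaryGroup κ ℂ) :
    ((1 : Mat ι) ⊗ₖ U) ∈ Matrix.unitaryGroup (ι × κ) ℂ := by
  rw [Matrix.mem_unitaryGroup_iff]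
  rw [Matrix.star_eq_conjTranspose, kron_conjTranspose, Matrix.conjTranspose_one,
    ← Matrix.mul_kronecker_mul, mul_one]
  rw [show U * Uᴴ = 1 by
    rw [← Matrix.star_eq_conjTranspose]; exact Matrix.mem_unitaryGroup_iff.mp hU]
  exact Matrix.one_kronecker_one

theorem one_kron_decomp (U : Mat κ) (c : κ → ℝ) :
    (1 : Mat ι) ⊗ₖ (U * Matrix.diagonal (fun i => (c i : ℂ)) * Uᴴ)
      = ((1 : Mat ι) ⊗ₖ U) * Matrix.diagonal (fun p : ι × κ => (c p.2 : ℂ))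
        * ((1 : Mat ι) ⊗ₖ U)ᴴ := by
  rw [kron_conjTranspose, Matrix.conjTranspose_one]
  rw [show Matrix.diagonal (fun p : ι × κ => (c p.2 : ℂ))
      = (1 : Mat ι) ⊗ₖ Matrix.diagonal (fun i => (c i : ℂ)) by
    rw [← Matrix.diagonal_one, Matrix.diagonal_kronecker_diagonal]
    congr 1
    funext p
    simp]
  rw [← Matrix.mul_kronecker_mul, ← Matrix.mul_kronecker_mul, one_mul, one_mul]

theorem matLog_one_kron (σ : Mat κ) (hσ : σ.IsHermitian) :
    matLog ((1 : Mat ι) ⊗ₖ σ) = (1 : Mat ι) ⊗ₖ matLog σ := by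
  have hspec : σ = (hσ.eigenvectorUnitary : Mat κ)
      * Matrix.diagonal (fun i => ((hσ.eigenvalues i : ℝ) : ℂ))
      * (hσ.eigenvectorUnitary : Mat κ)ᴴ := by
    have := hσ.spectral_theorem
    rw [Unitary.conjStarAlgAut_apply] at this
    simp only [Unitary.coe_star, Matrix.star_eq_conjTranspose] at this
    exact this
  conv_lhs => rw [hspec, one_kron_decomp]
  rw [matLog_decomp _ (one_kron_unitary (ι := ι) hσ.eigenvectorUnitary.2)
    (fun p : ι × κ => hσ.eigenvalues p.2)]
  rw [← one_kron_decomp (ι := ι) (hσ.eigenvectorUnitary : Mat κ)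
    (fun k => Real.logb 2 (hσ.eigenvalues k)), matLog_spectral hσ]

theorem reindexMap_apply (e : ι ≃ κ) (ρ : Mat ι) :
    reindexMap e ρ = ρ.submatrix e.symm e.symm := rfl

theorem matLog_reindex (e : ι ≃ κ) (ρ : Mat ι) :
    matLog (reindexMap e ρ) = reindexMap e (matLog ρ) := by
  rw [reindexMap_apply, reindexMap_apply]
  by_cases hρ : ρ.IsHermitian
  · have hspec : ρ = (hρ.eigenvectorUnitary : Mat ι)
        * Matrix.diagonal (fun i => ((hρ.eigenvalues i : ℝ) : ℂ))
        * (hρ.eigenvectorUnitary : Mat ι)ᴴ := by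
      have := hρ.spectral_theorem
      rw [Unitary.conjStarAlgAut_apply] at this
      simp only [Unitary.coe_star, Matrix.star_eq_conjTranspose] at this
      exact this
    set U := (hρ.eigenvectorUnitary : Mat ι)
    have hsub : ∀ c : ι → ℝ, (U * Matrix.diagonal (fun i => (c i : ℂ)) * Uᴴ).submatrix
          e.symm e.symm
        = (U.submatrix e.symm e.symm) * Matrix.diagonal (fun k => (c (e.symm k) : ℂ))
          * (U.submatrix e.symm e.symm)ᴴ := by
      intro c
      rw [Matrix.conjTranspose_submatrix]
      rw [← Matrix.submatrix_mul_equiv _ _ _ e.symm, ← Matrix.submatrix_mul_equiv _ _ _ e.symm]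
      congr 1
      rw [Matrix.submatrix_diagonal_equiv]
      rfl
    have hW : U.submatrix e.symm e.symm ∈ Matrix.unitaryGroup κ ℂ := by
      rw [Matrix.mem_unitaryGroup_iff, Matrix.star_eq_conjTranspose,
        Matrix.conjTranspose_submatrix, Matrix.submatrix_mul_equiv _ _ _ e.symm]
      have : U * Uᴴ = 1 := by
        rw [← Matrix.star_eq_conjTranspose]
        exact Matrix.mem_unitaryGroup_iff.mp hρ.eigenvectorUnitary.2
      rw [this, Matrix.submatrix_one_equiv]
    conv_lhs => rw [hspec, hsub, matLog_decomp _ hW (fun k => hρ.eigenvalues (e.symm k))]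
    rw [matLog_spectral hρ, hsub]
  · have hρ' : ¬ (ρ.submatrix e.symm e.symm).IsHermitian := by
      intro h
      have := h.submatrix e
      rw [Matrix.submatrix_submatrix] at this
      simp only [Equiv.symm_comp_self, Matrix.submatrix_id_id] at this
      exact hρ this
    rw [matLog, dif_neg hρ', matLog, dif_neg hρ]
    ext p q
    simp

end MatLogCor
section Klein

variable {ι : Type} [Fintype ι] [DecidableEq ι]

theorem trace_conj_pair (U V : Mat ι) (a b : ι → ℝ) :
    ((U * Matrix.diagonal (fun i => (a i : ℂ)) * Uᴴ)
      * (V * Matrix.diagonal (fun j => (b j : ℂ)) * Vᴴ)).trace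
    = ((∑ i, ∑ j, a i * b j * Complex.normSq ((Uᴴ * V) i j) : ℝ) : ℂ) := by
  set M := V * Matrix.diagonal (fun j => (b j : ℂ)) * Vᴴ with hM
  have h0 : (U * Matrix.diagonal (fun i => (a i : ℂ)) * Uᴴ) * M
      = U * (Matrix.diagonal (fun i => (a i : ℂ)) * (Uᴴ * M)) := by
    rw [Matrix.mul_assoc, Matrix.mul_assoc]
  rw [h0, Matrix.trace_mul_comm]
  have h1 : Matrix.diagonal (fun i => (a i : ℂ)) * (Uᴴ * M) * U
      = Matrix.diagonal (fun i => (a i : ℂ)) * (Uᴴ * M * U) := by rw [Matrix.mul_assoc]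
  rw [h1]
  have h2 : Uᴴ * M * U = (Uᴴ * V) * Matrix.diagonal (fun j => (b j : ℂ)) * (Uᴴ * V)ᴴ := by
    rw [hM, Matrix.conjTranspose_mul, Matrix.conjTranspose_conjTranspose]
    simp only [Matrix.mul_assoc]
  rw [h2]
  set W := Uᴴ * V with hW
  rw [Matrix.trace]
  have h3 : ∀ i, (Matrix.diagonal (fun i => (a i : ℂ))
      * (W * Matrix.diagonal (fun j => (b j : ℂ)) * Wᴴ)).diag i
      = ((∑ j, a i * b j * Complex.normSq (W i j) : ℝ) : ℂ) := by
    intro i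
    rw [Matrix.diag_apply, Matrix.diagonal_mul]
    have h4 : (W * Matrix.diagonal (fun j => (b j : ℂ)) * Wᴴ) i i
        = ∑ j, W i j * (b j : ℂ) * star (W i j) := by
      rw [Matrix.mul_apply]
      congr 1
      funext j
      rw [Matrix.mul_diagonal, Matrix.conjTranspose_apply]
    rw [h4, Finset.mul_sum]
    rw [Complex.ofReal_sum]
    congr 1
    funext j
    have : W i j * (b j : ℂ) * star (W i j) = (b j : ℂ) * (W i j * star (W i j)) := by ring
    rw [this, RCLike.star_def, Complex.mul_conj]
    push_cast
    ring
  rw [Finset.sum_congr rfl (fun i _ => h3 i), Complex.ofReal_sum]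

theorem sum_eigenvalues_eq_one {ρ : Mat ι} (hρ : IsState ρ) :
    ∑ i, hρ.1.1.eigenvalues i = 1 := by
  have hspec := hρ.1.1.spectral_theorem
  rw [Unitary.conjStarAlgAut_apply] at hspec
  simp only [Unitary.coe_star, Matrix.star_eq_conjTranspose] at hspec
  have h1 : ρ.trace = ((∑ i, hρ.1.1.eigenvalues i : ℝ) : ℂ) := by
    conv_lhs => rw [hspec]
    rw [Matrix.trace_mul_cycle, ← Matrix.star_eq_conjTranspose,
      Matrix.mem_unitaryGroup_iff'.mp hρ.1.1.eigenvectorUnitary.2, one_mul,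
      Matrix.trace_diagonal]
    push_cast
    rfl
  have h2 : ((∑ i, hρ.1.1.eigenvalues i : ℝ) : ℂ) = 1 := h1.symm.trans hρ.2
  exact_mod_cast h2

theorem klein {ρ σ : Mat ι} (hρ : IsState ρ) (hσ : IsState σ) (hsupp : suppSubset ρ σ) :
    0 ≤ ((ρ * (matLog ρ - matLog σ)).trace).re := by
  have hρh : ρ.IsHermitian := hρ.1.1
  have hσh : σ.IsHermitian := hσ.1.1
  set U := (hρh.eigenvectorUnitary : Mat ι) with hU
  set V := (hσh.eigenvectorUnitary : Mat ι) with hV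
  set p := hρh.eigenvalues with hp
  set q := hσh.eigenvalues with hq
  have hspecρ : ρ = U * Matrix.diagonal (fun i => (p i : ℂ)) * Uᴴ := by
    have := hρh.spectral_theorem
    rw [Unitary.conjStarAlgAut_apply] at this
    simp only [Unitary.coe_star, Matrix.star_eq_conjTranspose] at this
    exact this
  have hspecσ : σ = V * Matrix.diagonal (fun i => (q i : ℂ)) * Vᴴ := by
    have := hσh.spectral_theorem
    rw [Unitary.conjStarAlgAut_apply] at this
    simp only [Unitary.coe_star, Matrix.star_eq_conjTranspose] at this
    exact this
  set W := Uᴴ * V with hW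
  set c : ι → ι → ℝ := fun i j => Complex.normSq (W i j) with hc
  have hcnn : ∀ i j, 0 ≤ c i j := fun i j => Complex.normSq_nonneg _
  have hpnn : ∀ i, 0 ≤ p i := fun i => hρ.1.eigenvalues_nonneg i
  have hqnn : ∀ i, 0 ≤ q i := fun i => hσ.1.eigenvalues_nonneg i
  have hUU : Uᴴ * U = 1 := Matrix.mem_unitaryGroup_iff'.mp hρh.eigenvectorUnitary.2
  have hVV : Vᴴ * V = 1 := Matrix.mem_unitaryGroup_iff'.mp hσh.eigenvectorUnitary.2
  have hUU' : U * Uᴴ = 1 := Matrix.mem_unitaryGroup_iff.mp hρh.eigenvectorUnitary.2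
  have hVV' : V * Vᴴ = 1 := Matrix.mem_unitaryGroup_iff.mp hσh.eigenvectorUnitary.2
  -- row sums of c
  have hrow : ∀ i, ∑ j, c i j = 1 := by
    intro i
    have hWW : W * Wᴴ = 1 := by
      rw [hW, Matrix.conjTranspose_mul, Matrix.conjTranspose_conjTranspose]
      calc Uᴴ * V * (Vᴴ * U) = Uᴴ * (V * Vᴴ) * U := by simp only [Matrix.mul_assoc]
        _ = 1 := by rw [hVV', mul_one, hUU]
    have h1 : (W * Wᴴ) i i = ((∑ j, c i j : ℝ) : ℂ) := by
      rw [Matrix.mul_apply, Complex.ofReal_sum]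
      congr 1
      funext j
      rw [Matrix.conjTranspose_apply, RCLike.star_def, Complex.mul_conj]
    rw [hWW] at h1
    simp only [Matrix.one_apply_eq] at h1
    exact_mod_cast h1.symm
  have hcol : ∀ j, ∑ i, c i j = 1 := by
    intro j
    have hWW : Wᴴ * W = 1 := by
      rw [hW, Matrix.conjTranspose_mul, Matrix.conjTranspose_conjTranspose]
      calc Vᴴ * U * (Uᴴ * V) = Vᴴ * (U * Uᴴ) * V := by simp only [Matrix.mul_assoc]
        _ = 1 := by rw [hUU', mul_one, hVV]
    have h1 : (Wᴴ * W) j j = ((∑ i, c i j : ℝ) : ℂ) := by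
      rw [Matrix.mul_apply, Complex.ofReal_sum]
      congr 1
      funext i
      rw [Matrix.conjTranspose_apply, RCLike.star_def, mul_comm, Complex.mul_conj]
    rw [hWW] at h1
    simp only [Matrix.one_apply_eq] at h1
    exact_mod_cast h1.symm
  -- support condition
  have hzero : ∀ j, q j = 0 → ∀ i, p i * c i j = 0 := by
    intro j hqj i
    set v : ι → ℂ := fun k => V k j with hv
    have hσv : σ *ᵥ v = 0 := by
      have h1 : σ *ᵥ v = fun k => (σ * V) k j := by
        funext k
        rw [Matrix.mulVec, dotProduct, Matrix.mul_apply]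
      have h2 : σ * V = V * Matrix.diagonal (fun i => (q i : ℂ)) := by
        rw [hspecσ, Matrix.mul_assoc, hVV, mul_one]
      rw [h1, h2]
      funext k
      rw [Matrix.mul_diagonal]
      simp [hqj]
    have hρv : ρ *ᵥ v = 0 := hsupp v hσv
    have h3 : star v ⬝ᵥ ρ *ᵥ v = 0 := by rw [hρv, dotProduct_zero]
    have h4 : star v ⬝ᵥ ρ *ᵥ v = ((∑ i, p i * c i j : ℝ) : ℂ) := by
      have h5 : ρ *ᵥ v = fun k => (ρ * V) k j := by
        funext k
        rw [Matrix.mulVec, dotProduct, Matrix.mul_apply]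
      have h6 : ρ * V = U * Matrix.diagonal (fun i => (p i : ℂ)) * W := by
        rw [hspecρ, hW]
        simp only [Matrix.mul_assoc]
      rw [h5, h6]
      have h7 : star v ⬝ᵥ (fun k => (U * Matrix.diagonal (fun i => (p i : ℂ)) * W) k j)
          = (Vᴴ * (U * Matrix.diagonal (fun i => (p i : ℂ)) * W)) j j := by
        simp [dotProduct, Matrix.mul_apply, Matrix.conjTranspose_apply, hv]
      rw [h7]
      have h8 : Vᴴ * (U * Matrix.diagonal (fun i => (p i : ℂ)) * W)
          = Wᴴ * Matrix.diagonal (fun i => (p i : ℂ)) * W := by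
        rw [hW, Matrix.conjTranspose_mul, Matrix.conjTranspose_conjTranspose]
        simp only [Matrix.mul_assoc]
      rw [h8, Matrix.mul_apply, Complex.ofReal_sum]
      congr 1
      funext i
      rw [Matrix.mul_apply]
      rw [Finset.sum_eq_single i]
      · rw [Matrix.conjTranspose_apply, Matrix.diagonal_apply_eq]
        have : star (W i j) * (p i : ℂ) * W i j = (p i : ℂ) * (W i j * star (W i j)) := by ring
        rw [this, RCLike.star_def, Complex.mul_conj]
        push_cast
        ring
      · intro k _ hk
        rw [Matrix.diagonal_apply_ne _ hk, mul_zero]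
      · intro h
        exact absurd (Finset.mem_univ i) h
    rw [h3] at h4
    have h9 : ∑ i, p i * c i j = 0 := by exact_mod_cast h4.symm
    have h10 : ∀ i ∈ Finset.univ, 0 ≤ p i * c i j :=
      fun i _ => mul_nonneg (hpnn i) (hcnn i j)
    exact (Finset.sum_eq_zero_iff_of_nonneg h10).mp h9 i (Finset.mem_univ i)
  -- trace computations
  have hL1 : (ρ * matLog ρ).trace = ((∑ i, ∑ j, p i * Real.logb 2 (p j)
      * Complex.normSq ((Uᴴ * U) i j) : ℝ) : ℂ) := by
    have h := trace_conj_pair U U p (fun j => Real.logb 2 (p j))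
    rw [← matLog_spectral hρh, ← hspecρ] at h
    exact h
  have hL2 : (ρ * matLog σ).trace = ((∑ i, ∑ j, p i * Real.logb 2 (q j) * c i j : ℝ) : ℂ) := by
    have h := trace_conj_pair U V p (fun j => Real.logb 2 (q j))
    rw [← matLog_spectral hσh, ← hspecρ] at h
    exact h
  have hL1' : (ρ * matLog ρ).trace = ((∑ i, p i * Real.logb 2 (p i) : ℝ) : ℂ) := by
    rw [hL1]
    congr 1
    rw [hUU]
    congr 1
    funext i
    rw [Finset.sum_eq_single i]
    · simp
    · intro k _ hk
      rw [Matrix.one_apply_ne (Ne.symm hk)]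
      simp
    · intro h
      exact absurd (Finset.mem_univ i) h
  rw [Matrix.mul_sub, Matrix.trace_sub, hL1', hL2, Complex.sub_re, Complex.ofReal_re,
    Complex.ofReal_re, sub_nonneg]
  -- the real inequality
  have hsum_p : ∑ i, p i = 1 := sum_eigenvalues_eq_one hρ
  have hsum_q : ∑ i, q i = 1 := sum_eigenvalues_eq_one hσ
  have hlog2 : 0 < Real.log 2 := Real.log_pos one_lt_two
  have key : ∀ i j, (p i * c i j - q j * c i j) / Real.log 2
      ≤ p i * Real.logb 2 (p i) * c i j - p i * Real.logb 2 (q j) * c i j := by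
    intro i j
    rcases eq_or_lt_of_le (hpnn i) with hpi | hpi
    · rw [← hpi]
      simp only [zero_mul, zero_sub, zero_mul, sub_zero]
      apply div_nonpos_of_nonpos_of_nonneg
      · simp only [neg_nonpos]
        exact mul_nonneg (hqnn j) (hcnn i j)
      · exact hlog2.le
    · rcases eq_or_lt_of_le (hqnn j) with hqj | hqj
      · have hcij : c i j = 0 := by
          have := hzero j hqj.symm i
          exact (mul_eq_zero.mp this).resolve_left (ne_of_gt hpi)
        rw [hcij]
        simp
      · have hlog : Real.log (q j) - Real.log (p i) ≤ q j / p i - 1 := by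
          have := Real.log_le_sub_one_of_pos (div_pos hqj hpi)
          rwa [Real.log_div (ne_of_gt hqj) (ne_of_gt hpi)] at this
        have hmul : p i * c i j * (Real.log (q j) - Real.log (p i))
            ≤ c i j * q j - c i j * p i := by
          have h1 : p i * c i j * (Real.log (q j) - Real.log (p i))
              ≤ p i * c i j * (q j / p i - 1) := by
            apply mul_le_mul_of_nonneg_left hlog
            exact mul_nonneg hpi.le (hcnn i j)
          have h2 : p i * c i j * (q j / p i - 1) = c i j * q j - c i j * p i := by
            field_simp
          linarith
        rw [Real.logb, Real.logb, div_le_iff₀ hlog2]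
        have hexp : (p i * (Real.log (p i) / Real.log 2) * c i j
            - p i * (Real.log (q j) / Real.log 2) * c i j) * Real.log 2
            = p i * c i j * (Real.log (p i) - Real.log (q j)) := by
          field_simp
        rw [hexp]
        linarith
  have h1 : ∑ i, ∑ j, p i * c i j = 1 := by
    calc ∑ i, ∑ j, p i * c i j = ∑ i, p i * ∑ j, c i j := by
          apply Finset.sum_congr rfl
          intro i _
          rw [Finset.mul_sum]
      _ = ∑ i, p i := by
          apply Finset.sum_congr rfl
          intro i _
          rw [hrow i, mul_one]
      _ = 1 := hsum_p
  have h2 : ∑ i, ∑ j, q j * c i j = 1 := by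
    rw [Finset.sum_comm]
    calc ∑ j, ∑ i, q j * c i j = ∑ j, q j * ∑ i, c i j := by
          apply Finset.sum_congr rfl
          intro j _
          rw [Finset.mul_sum]
      _ = ∑ j, q j := by
          apply Finset.sum_congr rfl
          intro j _
          rw [hcol j, mul_one]
      _ = 1 := hsum_q
  have hbound : ∑ i, ∑ j, p i * Real.logb 2 (q j) * c i j
      ≤ ∑ i, ∑ j, (p i * Real.logb 2 (p i) * c i j
          - (p i * c i j - q j * c i j) / Real.log 2) := by
    apply Finset.sum_le_sum
    intro i _
    apply Finset.sum_le_sum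
    intro j _
    have := key i j
    linarith
  have esplit : ∑ i, ∑ j, (p i * Real.logb 2 (p i) * c i j
        - (p i * c i j - q j * c i j) / Real.log 2)
      = (∑ i, ∑ j, p i * Real.logb 2 (p i) * c i j)
        - ∑ i, ∑ j, (p i * c i j - q j * c i j) / Real.log 2 := by
    simp only [Finset.sum_sub_distrib]
  have e1 : ∑ i, ∑ j, p i * Real.logb 2 (p i) * c i j = ∑ i, p i * Real.logb 2 (p i) := by
    apply Finset.sum_congr rfl
    intro i _
    rw [← Finset.mul_sum, hrow, mul_one]
  have e2 : ∑ i, ∑ j, (p i * c i j - q j * c i j) / Real.log 2 = 0 := by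
    have e3 : ∑ i, ∑ j, (p i * c i j - q j * c i j) / Real.log 2
        = (∑ i, ∑ j, (p i * c i j - q j * c i j)) / Real.log 2 := by
      simp only [← Finset.sum_div]
    have e4 : ∑ i, ∑ j, (p i * c i j - q j * c i j)
        = (∑ i, ∑ j, p i * c i j) - ∑ i, ∑ j, q j * c i j := by
      simp only [Finset.sum_sub_distrib]
    rw [e3, e4, h1, h2, sub_self, zero_div]
  linarith

end Klein
section Structural

theorem tensorMap_apply {ι₁ κ₁ ι₂ κ₂ : Type} [Fintype ι₁] [DecidableEq ι₁] [Fintype ι₂]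
    [DecidableEq ι₂] (L₁ : MatMap ι₁ κ₁) (L₂ : MatMap ι₂ κ₂) (X : Mat (ι₁ × ι₂))
    (p q : κ₁ × κ₂) :
    tensorMap L₁ L₂ X p q = ∑ k₁, ∑ l₁, ∑ k₂, ∑ l₂,
      X (k₁, k₂) (l₁, l₂) * L₁ (Matrix.single k₁ l₁ 1) p.1 q.1
        * L₂ (Matrix.single k₂ l₂ 1) p.2 q.2 := rfl

variable {ι₁ ι₂ κ₂ : Type} [Fintype ι₁] [DecidableEq ι₁] [Fintype ι₂] [DecidableEq ι₂]
  [Fintype κ₂] [DecidableEq κ₂]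

theorem tensorMap_id_apply (L : MatMap ι₂ κ₂) (X : Mat (ι₁ × ι₂)) (p q : ι₁ × κ₂) :
    tensorMap (LinearMap.id : MatMap ι₁ ι₁) L X p q
      = ∑ k, ∑ l, X (p.1, k) (q.1, l) * L (Matrix.single k l 1) p.2 q.2 := by
  rw [tensorMap_apply]
  rw [Finset.sum_eq_single p.1]
  rotate_left
  · intro b _ hb
    apply Finset.sum_eq_zero; intro l _
    apply Finset.sum_eq_zero; intro k2 _
    apply Finset.sum_eq_zero; intro l2 _
    simp [Matrix.single, hb, Ne.symm hb]
  · intro h; exact absurd (Finset.mem_univ _) h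
  rw [Finset.sum_eq_single q.1]
  rotate_left
  · intro b _ hb
    apply Finset.sum_eq_zero; intro k2 _
    apply Finset.sum_eq_zero; intro l2 _
    simp [Matrix.single, hb, Ne.symm hb]
  · intro h; exact absurd (Finset.mem_univ _) h
  apply Finset.sum_congr rfl; intro k _
  apply Finset.sum_congr rfl; intro l _
  simp [Matrix.single]

theorem stdBasis_trace (k l : ι₂) :
    (Matrix.single k l (1:ℂ)).trace = if k = l then 1 else 0 := by
  rw [Matrix.trace]
  by_cases h : k = l
  · subst h
    simp [Matrix.single, Matrix.diag]
  · rw [if_neg h]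
    apply Finset.sum_eq_zero
    intro i _
    simp only [Matrix.diag_apply, Matrix.single, Matrix.of_apply]
    rw [if_neg]
    rintro ⟨h1, h2⟩
    exact h (h1.trans h2.symm)

theorem tensorMap_id_tp (L : MatMap ι₂ κ₂) (hL : TracePreserving L) :
    TracePreserving (tensorMap (LinearMap.id : MatMap ι₁ ι₁) L) := by
  intro X
  calc (tensorMap (LinearMap.id : MatMap ι₁ ι₁) L X).trace
      = ∑ a : ι₁, ∑ b : κ₂, ∑ k, ∑ l, X (a, k) (a, l)
          * L (Matrix.single k l 1) b b := by
        rw [Matrix.trace, Fintype.sum_prod_type]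
        apply Finset.sum_congr rfl; intro a _
        apply Finset.sum_congr rfl; intro b _
        exact tensorMap_id_apply L X (a, b) (a, b)
    _ = ∑ a : ι₁, ∑ k, ∑ l, X (a, k) (a, l) * (L (Matrix.single k l 1)).trace := by
        apply Finset.sum_congr rfl; intro a _
        rw [Finset.sum_comm]
        apply Finset.sum_congr rfl; intro k _
        rw [Finset.sum_comm]
        apply Finset.sum_congr rfl; intro l _
        rw [← Finset.mul_sum]
        rfl
    _ = ∑ a : ι₁, ∑ k, X (a, k) (a, k) := by
        apply Finset.sum_congr rfl; intro a _
        apply Finset.sum_congr rfl; intro k _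
        rw [Finset.sum_eq_single k]
        · rw [hL, stdBasis_trace, if_pos rfl, mul_one]
        · intro l _ hl
          rw [hL, stdBasis_trace, if_neg (Ne.symm hl), mul_zero]
        · intro h; exact absurd (Finset.mem_univ _) h
    _ = X.trace := by
        rw [Matrix.trace, Fintype.sum_prod_type]
        rfl

/-- The isometry embedding `C → A ⊗ C` at slot `a`. -/
def embedMap {A C : Type} [DecidableEq A] [DecidableEq C] (a : A) : Matrix C (A × C) ℂ :=
  Matrix.of fun c p => if p = (a, c) then 1 else 0

variable {A C : Type} [Fintype A] [DecidableEq A] [Fintype C] [DecidableEq C]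

/-- Conjugation by the embedding: extracts the `a`-th diagonal block. -/
def embedConj (a : A) (X : Mat (A × C)) : Mat C :=
  embedMap (C := C) a * X * (embedMap (C := C) a)ᴴ

theorem embed_conj_apply (a : A) (X : Mat (A × C)) (c c' : C) :
    embedConj a X c c' = X (a, c) (a, c') := by
  rw [embedConj, Matrix.mul_apply]
  rw [Finset.sum_eq_single ((a, c') : A × C)]
  · rw [Matrix.mul_apply, Finset.sum_eq_single ((a, c) : A × C)]
    · simp [embedMap, Matrix.conjTranspose_apply]
    · intro b _ hb
      simp [embedMap, hb]
    · intro h; exact absurd (Finset.mem_univ _) h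
  · intro b _ hb
    simp only [Matrix.conjTranspose_apply, embedMap, Matrix.of_apply]
    rw [if_neg hb]
    simp
  · intro h; exact absurd (Finset.mem_univ _) h

theorem ptraceLeft_apply (X : Mat (A × C)) (c c' : C) :
    ptraceLeftMap A C X c c' = ∑ k, X (k, c) (k, c') := rfl

theorem ptrace_eq_sum_embed (X : Mat (A × C)) :
    ptraceLeftMap A C X = ∑ a, embedConj a X := by
  ext c c'
  rw [ptraceLeft_apply, Matrix.sum_apply]
  apply Finset.sum_congr rfl
  intro a _
  exact (embed_conj_apply a X c c').symm

theorem ptraceLeft_posSemidef {X : Mat (A × C)} (hX : X.PosSemidef) :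
    (ptraceLeftMap A C X).PosSemidef := by
  rw [ptrace_eq_sum_embed]
  have h : ∀ s : Finset A, (∑ a ∈ s, embedConj a X).PosSemidef := by
    intro s
    induction s using Finset.induction with
    | empty => simpa using Matrix.PosSemidef.zero
    | insert _ _ hni ih =>
        rw [Finset.sum_insert hni]
        exact (hX.mul_mul_conjTranspose_same (embedMap _)).add ih
  exact h Finset.univ

theorem ptraceLeft_trace (X : Mat (A × C)) : (ptraceLeftMap A C X).trace = X.trace := by
  rw [Matrix.trace, Matrix.trace, Fintype.sum_prod_type, Finset.sum_comm]
  rfl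

theorem ptraceLeft_state {X : Mat (A × C)} (hX : IsState X) :
    IsState (ptraceLeftMap A C X) :=
  ⟨ptraceLeft_posSemidef hX.1, (ptraceLeft_trace X).trans hX.2⟩

theorem embed_conjT_mulVec (a : A) (y : C → ℂ) :
    (embedMap a)ᴴ *ᵥ y = fun p : A × C => if p.1 = a then y p.2 else 0 := by
  funext p
  rcases p with ⟨x, c⟩
  simp only [Matrix.mulVec, dotProduct, Matrix.conjTranspose_apply, embedMap,
    Matrix.of_apply]
  by_cases hx : x = a
  · subst hx
    rw [if_pos rfl]
    rw [Finset.sum_eq_single c]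
    · simp
    · intro b _ hb
      have hne : ¬ (((x, c) : A × C) = (x, b)) := by simp [Ne.symm hb]
      rw [if_neg hne]
      simp
    · intro h; exact absurd (Finset.mem_univ _) h
  · rw [if_neg hx]
    apply Finset.sum_eq_zero
    intro b _
    have hne : ¬ (((x, c) : A × C) = (a, b)) := by simp [hx]
    rw [if_neg hne]
    simp

theorem quad_conj (a : A) (X : Mat (A × C)) (y : C → ℂ) :
    star y ⬝ᵥ (embedConj a X *ᵥ y)
      = star ((embedMap a)ᴴ *ᵥ y) ⬝ᵥ (X *ᵥ ((embedMap a)ᴴ *ᵥ y)) := by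
  rw [embedConj, ← Matrix.mulVec_mulVec, ← Matrix.mulVec_mulVec, dotProduct_mulVec,
    Matrix.star_mulVec, Matrix.conjTranspose_conjTranspose]

theorem sum_mulVec' {ι κ : Type} [Fintype ι] [Fintype κ] (M : κ → Mat ι) (v : ι → ℂ) :
    (∑ k, M k) *ᵥ v = ∑ k, M k *ᵥ v := by
  funext i
  simp [Matrix.mulVec, dotProduct, Finset.sum_apply, Matrix.sum_apply,
    Finset.sum_mul, Finset.sum_comm (γ := κ)]

theorem mulVec_sum' {ι κ : Type} [Fintype ι] [Fintype κ] (M : Mat ι) (f : κ → ι → ℂ) :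
    M *ᵥ (∑ k, f k) = ∑ k, M *ᵥ (f k) := by
  funext i
  simp [Matrix.mulVec, dotProduct, Finset.sum_apply, Finset.mul_sum]
  rw [Finset.sum_comm]

theorem dotProduct_sum' {ι κ : Type} [Fintype ι] [Fintype κ] (v : ι → ℂ) (f : κ → ι → ℂ) :
    v ⬝ᵥ (∑ k, f k) = ∑ k, v ⬝ᵥ (f k) := by
  simp [dotProduct, Finset.sum_apply, Finset.mul_sum]
  rw [Finset.sum_comm]

theorem supp_sub_one_kron {X : Mat (A × C)} (hX : X.PosSemidef) :
    suppSubset X ((1 : Mat A) ⊗ₖ ptraceLeftMap A C X) := by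
  intro v hv
  -- componentwise kernel conditions
  have hcomp : ∀ a : A, ptraceLeftMap A C X *ᵥ (fun c => v (a, c)) = 0 := by
    intro a
    funext c
    have h1 := congrFun hv (a, c)
    simp only [Matrix.mulVec, dotProduct, Fintype.sum_prod_type,
      Matrix.kroneckerMap_apply, Matrix.one_apply, Pi.zero_apply] at h1 ⊢
    rw [Finset.sum_eq_single a] at h1
    · simpa [ptraceLeft_apply] using h1
    · intro b _ hb
      apply Finset.sum_eq_zero
      intro c' _
      rw [if_neg (Ne.symm hb), zero_mul, zero_mul]
    · intro h; exact absurd (Finset.mem_univ _) h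
  -- each embedded vector is in the kernel of X
  have hker : ∀ a : A, X *ᵥ ((embedMap a)ᴴ *ᵥ (fun c => v (a, c))) = 0 := by
    intro a
    have h2 : star (fun c => v (a, c)) ⬝ᵥ (ptraceLeftMap A C X *ᵥ (fun c => v (a, c)))
        = 0 := by
      rw [hcomp a, dotProduct_zero]
    have h3 : star (fun c => v (a, c)) ⬝ᵥ (ptraceLeftMap A C X *ᵥ (fun c => v (a, c)))
        = ∑ x, star ((embedMap x)ᴴ *ᵥ (fun c => v (a, c)))
            ⬝ᵥ (X *ᵥ ((embedMap x)ᴴ *ᵥ (fun c => v (a, c)))) := by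
      rw [ptrace_eq_sum_embed, sum_mulVec', dotProduct_sum']
      apply Finset.sum_congr rfl
      intro x _
      exact quad_conj x X (fun c => v (a, c))
    rw [h3] at h2
    have h4 : ∀ x ∈ Finset.univ, (0:ℂ)
        ≤ star ((embedMap x)ᴴ *ᵥ (fun c => v (a, c)))
            ⬝ᵥ (X *ᵥ ((embedMap x)ᴴ *ᵥ (fun c => v (a, c)))) :=
      fun x _ => hX.dotProduct_mulVec_nonneg _
    have h5 := (Finset.sum_eq_zero_iff_of_nonneg h4).mp h2 a (Finset.mem_univ a)
    exact (hX.dotProduct_mulVec_zero_iff _).mp h5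
  have hsum : v = ∑ a, (embedMap a)ᴴ *ᵥ (fun c => v (a, c)) := by
    funext p
    rw [Finset.sum_apply]
    have : ∀ a, ((embedMap a)ᴴ *ᵥ (fun c => v (a, c))) p
        = if p.1 = a then v (a, p.2) else 0 := by
      intro a
      rw [embed_conjT_mulVec]
    rw [Finset.sum_congr rfl (fun a _ => this a)]
    rw [Finset.sum_eq_single p.1]
    · simp
    · intro b _ hb
      exact if_neg (fun h => hb h.symm)
    · intro h; exact absurd (Finset.mem_univ _) h
  rw [hsum, mulVec_sum']
  apply Finset.sum_eq_zero
  intro a _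
  exact hker a

theorem supp_sub_ptrace {X : Mat (A × C)} {σ : Mat C}
    (h : suppSubset X ((1 : Mat A) ⊗ₖ σ)) :
    suppSubset (ptraceLeftMap A C X) σ := by
  intro y hy
  have hker : ∀ a : A, X *ᵥ ((embedMap a)ᴴ *ᵥ y) = 0 := by
    intro a
    apply h
    rw [embed_conjT_mulVec]
    funext p
    rcases p with ⟨x, c⟩
    simp only [Matrix.mulVec, dotProduct, Fintype.sum_prod_type,
      Matrix.kroneckerMap_apply, Pi.zero_apply]
    rw [Finset.sum_eq_single x]
    · by_cases hx : x = a
      · subst hx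
        simp only [Matrix.one_apply_eq, one_mul, if_pos rfl]
        have := congrFun hy c
        simpa [Matrix.mulVec, dotProduct] using this
      · apply Finset.sum_eq_zero
        intro c' _
        rw [if_neg hx, mul_zero]
    · intro b _ hb
      apply Finset.sum_eq_zero
      intro c' _
      rw [Matrix.one_apply_ne (Ne.symm hb), zero_mul, zero_mul]
    · intro hh; exact absurd (Finset.mem_univ _) hh
  funext c
  have hra : ∀ a : A, (X *ᵥ ((embedMap a)ᴴ *ᵥ y)) (a, c) = ∑ c', X (a, c) (a, c') * y c' := by
    intro a
    rw [embed_conjT_mulVec]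
    rw [show (X *ᵥ fun p : A × C => if p.1 = a then y p.2 else 0) (a, c)
        = ∑ q : A × C, X (a, c) q * (if q.1 = a then y q.2 else 0) from rfl]
    rw [Fintype.sum_prod_type]
    rw [Finset.sum_eq_single a]
    · apply Finset.sum_congr rfl
      intro c' _
      rw [if_pos rfl]
    · intro b _ hb
      apply Finset.sum_eq_zero
      intro c' _
      rw [if_neg hb, mul_zero]
    · intro hh; exact absurd (Finset.mem_univ _) hh
  have key : (ptraceLeftMap A C X *ᵥ y) c = ∑ a, ∑ c', X (a, c) (a, c') * y c' := by
    rw [show (ptraceLeftMap A C X *ᵥ y) c = ∑ c', ptraceLeftMap A C X c c' * y c' from rfl]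
    rw [Finset.sum_congr rfl (fun c' _ => by rw [ptraceLeft_apply, Finset.sum_mul])]
    exact Finset.sum_comm
  rw [key]
  simp only [Pi.zero_apply]
  apply Finset.sum_eq_zero
  intro a _
  rw [← hra a, hker a]
  rfl

theorem trace_mul_one_kron (X : Mat (A × C)) (Y : Mat C) :
    (X * ((1 : Mat A) ⊗ₖ Y)).trace = ((ptraceLeftMap A C X) * Y).trace := by
  rw [Matrix.trace, Matrix.trace, Fintype.sum_prod_type]
  rw [Finset.sum_comm]
  apply Finset.sum_congr rfl
  intro c _
  rw [Matrix.diag_apply, Matrix.mul_apply]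
  calc ∑ a, (X * ((1 : Mat A) ⊗ₖ Y)) (a, c) (a, c)
      = ∑ a, ∑ c', X (a, c) (a, c') * Y c' c := by
        apply Finset.sum_congr rfl
        intro a _
        rw [Matrix.mul_apply, Fintype.sum_prod_type]
        rw [Finset.sum_eq_single a]
        · apply Finset.sum_congr rfl
          intro c' _
          rw [Matrix.kroneckerMap_apply, Matrix.one_apply_eq, one_mul]
        · intro b _ hb
          apply Finset.sum_eq_zero
          intro c' _
          rw [Matrix.kroneckerMap_apply, Matrix.one_apply_ne hb, zero_mul, mul_zero]
        · intro hh; exact absurd (Finset.mem_univ _) hh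
    _ = ∑ c', (∑ a, X (a, c) (a, c')) * Y c' c := by
        rw [Finset.sum_comm]
        apply Finset.sum_congr rfl
        intro c' _
        rw [Finset.sum_mul]
    _ = ∑ c', ptraceLeftMap A C X c c' * Y c' c := rfl

end Structural

section Reindex

variable {ι κ : Type} [Fintype ι] [DecidableEq ι] [Fintype κ] [DecidableEq κ]

theorem reindex_trace (e : ι ≃ κ) (ρ : Mat ι) : (reindexMap e ρ).trace = ρ.trace := by
  rw [reindexMap_apply, Matrix.trace, Matrix.trace]
  exact Equiv.sum_comp e.symm (fun i => ρ i i)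

theorem reindex_posSemidef (e : ι ≃ κ) {ρ : Mat ι} (hρ : ρ.PosSemidef) :
    (reindexMap e ρ).PosSemidef := by
  rw [reindexMap_apply]
  exact hρ.submatrix e.symm

theorem reindex_state (e : ι ≃ κ) {ρ : Mat ι} (hρ : IsState ρ) : IsState (reindexMap e ρ) :=
  ⟨reindex_posSemidef e hρ.1, (reindex_trace e ρ).trans hρ.2⟩

theorem reindex_mulVec (e : ι ≃ κ) (M : Mat ι) (u : κ → ℂ) :
    reindexMap e M *ᵥ u = (M *ᵥ (u ∘ e)) ∘ e.symm := by
  rw [reindexMap_apply, Matrix.submatrix_mulVec_equiv, Equiv.symm_symm]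

theorem suppSubset_reindex (e : ι ≃ κ) (ρ σ : Mat ι) :
    suppSubset (reindexMap e ρ) (reindexMap e σ) ↔ suppSubset ρ σ := by
  constructor
  · intro h v hv
    have hco : (v ∘ ⇑e.symm) ∘ ⇑e = v := by funext i; simp
    have h1 : reindexMap e σ *ᵥ (v ∘ e.symm) = 0 := by
      rw [reindex_mulVec, hco, hv]
      funext k
      rfl
    have h2 := h _ h1
    rw [reindex_mulVec, hco] at h2
    funext i
    have := congrFun h2 (e i)
    simpa using this
  · intro h u hu
    rw [reindex_mulVec] at hu ⊢
    have h1 : σ *ᵥ (u ∘ e) = 0 := by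
      funext i
      have := congrFun hu (e i)
      simpa using this
    rw [h _ h1]
    funext k
    rfl

theorem reindex_mul (e : ι ≃ κ) (X Y : Mat ι) :
    reindexMap e X * reindexMap e Y = reindexMap e (X * Y) := by
  rw [reindexMap_apply, reindexMap_apply, reindexMap_apply]
  exact Matrix.submatrix_mul_equiv X Y _ e.symm _

theorem relEnt_reindex (e : ι ≃ κ) (ρ σ : Mat ι) :
    relEnt (reindexMap e ρ) (reindexMap e σ) = relEnt ρ σ := by
  rw [relEnt, relEnt]
  by_cases h : suppSubset ρ σ
  · rw [if_pos ((suppSubset_reindex e ρ σ).mpr h), if_pos h]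
    have h1 : reindexMap e ρ * (matLog (reindexMap e ρ) - matLog (reindexMap e σ))
        = reindexMap e (ρ * (matLog ρ - matLog σ)) := by
      rw [matLog_reindex, matLog_reindex, ← map_sub, reindex_mul]
    rw [h1, reindex_trace]
  · rw [if_neg (fun hc => h ((suppSubset_reindex e ρ σ).mp hc)), if_neg h]

end Reindex
section Compare

variable {A C : Type} [Fintype A] [DecidableEq A] [Fintype C] [DecidableEq C]

theorem relEnt_ptrace_le (ρ : Mat (A × C)) (σ : Mat C) (hρ : IsState ρ) (hσ : IsState σ) :
    relEnt ρ ((1 : Mat A) ⊗ₖ ptraceLeftMap A C ρ) ≤ relEnt ρ ((1 : Mat A) ⊗ₖ σ) := by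
  classical
  by_cases hs : suppSubset ρ ((1 : Mat A) ⊗ₖ σ)
  · have hρC : IsState (ptraceLeftMap A C ρ) := ptraceLeft_state hρ
    have h1 : suppSubset ρ ((1 : Mat A) ⊗ₖ ptraceLeftMap A C ρ) := supp_sub_one_kron hρ.1
    rw [relEnt, relEnt, if_pos h1, if_pos hs]
    apply EReal.coe_le_coe_iff.mpr
    have hσh : σ.IsHermitian := hσ.1.1
    have hρCh : (ptraceLeftMap A C ρ).IsHermitian := hρC.1.1
    rw [Matrix.mul_sub, Matrix.mul_sub, Matrix.trace_sub, Matrix.trace_sub, Complex.sub_re,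
      Complex.sub_re]
    apply sub_le_sub_left
    rw [matLog_one_kron σ hσh, matLog_one_kron _ hρCh, trace_mul_one_kron, trace_mul_one_kron]
    have hk := klein hρC hσ (supp_sub_ptrace hs)
    rw [Matrix.mul_sub, Matrix.trace_sub, Complex.sub_re] at hk
    linarith
  · have htop : relEnt ρ ((1 : Mat A) ⊗ₖ σ) = ⊤ := by rw [relEnt, if_neg hs]
    rw [htop]
    exact le_top

end Compare

section Identity

variable {R A' B' A B : Type} [Fintype R] [DecidableEq R] [Fintype A'] [DecidableEq A']
  [Fintype B'] [DecidableEq B'] [Fintype A] [DecidableEq A] [Fintype B] [DecidableEq B]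

theorem rmap_tensor_std (M : MatMap B' B) (x x' : A') (y y' : B') (aa ab : A) (ba bb : B) :
    tensorMap (Rmap A' A) M (Matrix.single ((x, y) : A' × B') ((x', y') : A' × B') 1)
        (aa, ba) (ab, bb)
      = (if x = x' then 1 else 0) * (1 : Mat A) aa ab
          * M (Matrix.single y y' 1) ba bb := by
  rw [tensorMap_apply]
  rw [Finset.sum_eq_single x]
  rotate_left
  · intro k1 _ hk1
    apply Finset.sum_eq_zero; intro l1 _
    apply Finset.sum_eq_zero; intro k2 _
    apply Finset.sum_eq_zero; intro l2 _
    have h0 : Matrix.single ((x, y) : A' × B') ((x', y') : A' × B') (1:ℂ) (k1, k2)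
        (l1, l2) = 0 := by simp [Matrix.single, Prod.ext_iff, Ne.symm hk1]
    rw [h0, zero_mul, zero_mul]
  · intro h; exact absurd (Finset.mem_univ _) h
  rw [Finset.sum_eq_single x']
  rotate_left
  · intro l1 _ hl1
    apply Finset.sum_eq_zero; intro k2 _
    apply Finset.sum_eq_zero; intro l2 _
    have h0 : Matrix.single ((x, y) : A' × B') ((x', y') : A' × B') (1:ℂ) (x, k2)
        (l1, l2) = 0 := by simp [Matrix.single, Prod.ext_iff, Ne.symm hl1]
    rw [h0, zero_mul, zero_mul]
  · intro h; exact absurd (Finset.mem_univ _) h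
  rw [Finset.sum_eq_single y]
  rotate_left
  · intro k2 _ hk2
    apply Finset.sum_eq_zero; intro l2 _
    have h0 : Matrix.single ((x, y) : A' × B') ((x', y') : A' × B') (1:ℂ) (x, k2)
        (x', l2) = 0 := by simp [Matrix.single, Prod.ext_iff, Ne.symm hk2]
    rw [h0, zero_mul, zero_mul]
  · intro h; exact absurd (Finset.mem_univ _) h
  rw [Finset.sum_eq_single y']
  rotate_left
  · intro l2 _ hl2
    have h0 : Matrix.single ((x, y) : A' × B') ((x', y') : A' × B') (1:ℂ) (x, y)
        (x', l2) = 0 := by simp [Matrix.single, Prod.ext_iff, Ne.symm hl2]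
    rw [h0, zero_mul, zero_mul]
  · intro h; exact absurd (Finset.mem_univ _) h
  have h1 : Matrix.single ((x, y) : A' × B') ((x', y') : A' × B') (1:ℂ) (x, y)
      (x', y') = 1 := by simp [Matrix.single]
  rw [h1, one_mul]
  congr 1
  have h2 : (Rmap A' A) (Matrix.single x x' 1) aa ab
      = (Matrix.single x x' (1:ℂ)).trace * (1 : Mat A) aa ab := by
    rw [Rmap]
    simp [Matrix.smul_apply, smul_eq_mul]
  rw [h2, stdBasis_trace]

theorem rmap_tensor_identity (M : MatMap B' B) (ψ : Mat (R × (A' × B'))) :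
    reindexMap (swapRA R A B)
        (tensorMap (LinearMap.id : MatMap R R) (tensorMap (Rmap A' A) M) ψ)
      = (1 : Mat A) ⊗ₖ (tensorMap (LinearMap.id : MatMap R R) M
          (ptraceLeftMap A' (R × B') (reindexMap (swapRA R A' B') ψ))) := by
  ext p q
  obtain ⟨a₁, r₁, b₁⟩ := p
  obtain ⟨a₂, r₂, b₂⟩ := q
  rw [Matrix.kroneckerMap_apply, reindexMap_apply, Matrix.submatrix_apply]
  rw [show (swapRA R A B).symm (a₁, r₁, b₁) = (r₁, (a₁, b₁)) from rfl,
    show (swapRA R A B).symm (a₂, r₂, b₂) = (r₂, (a₂, b₂)) from rfl]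
  rw [tensorMap_id_apply]
  -- expand pair sums
  rw [Fintype.sum_prod_type]
  have hinner : ∀ x : A', ∀ y : B',
      (∑ l : A' × B', ψ (r₁, (x, y)) (r₂, l)
        * tensorMap (Rmap A' A) M (Matrix.single ((x, y) : A' × B') l 1)
            (a₁, b₁) (a₂, b₂))
      = (1 : Mat A) a₁ a₂ * ∑ y' : B', ψ (r₁, (x, y)) (r₂, (x, y'))
          * M (Matrix.single y y' 1) b₁ b₂ := by
    intro x y
    rw [Fintype.sum_prod_type]
    rw [Finset.sum_eq_single x]
    · rw [Finset.mul_sum]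
      apply Finset.sum_congr rfl
      intro y' _
      rw [rmap_tensor_std, if_pos rfl, one_mul]
      ring
    · intro x' _ hx'
      apply Finset.sum_eq_zero
      intro y' _
      rw [rmap_tensor_std, if_neg (Ne.symm hx'), zero_mul, zero_mul, mul_zero]
    · intro h; exact absurd (Finset.mem_univ _) h
  calc ∑ x : A', ∑ y : B', ∑ l : A' × B', ψ (r₁, (x, y)) (r₂, l)
        * tensorMap (Rmap A' A) M (Matrix.single ((x, y) : A' × B') l 1)
          (a₁, b₁) (a₂, b₂)
      = ∑ x : A', ∑ y : B', (1 : Mat A) a₁ a₂ * ∑ y' : B', ψ (r₁, (x, y)) (r₂, (x, y'))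
          * M (Matrix.single y y' 1) b₁ b₂ := by
        apply Finset.sum_congr rfl; intro x _
        apply Finset.sum_congr rfl; intro y _
        exact hinner x y
    _ = (1 : Mat A) a₁ a₂ * ∑ x : A', ∑ y : B', ∑ y' : B', ψ (r₁, (x, y)) (r₂, (x, y'))
          * M (Matrix.single y y' 1) b₁ b₂ := by
        rw [Finset.mul_sum]
        apply Finset.sum_congr rfl; intro x _
        rw [Finset.mul_sum]
    _ = (1 : Mat A) a₁ a₂ * (tensorMap (LinearMap.id : MatMap R R) M
          (ptraceLeftMap A' (R × B') (reindexMap (swapRA R A' B') ψ))) (r₁, b₁) (r₂, b₂) := by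
        congr 1
        rw [tensorMap_id_apply]
        rw [Finset.sum_comm]
        apply Finset.sum_congr rfl; intro y _
        rw [Finset.sum_comm]
        apply Finset.sum_congr rfl; intro y' _
        rw [ptraceLeft_apply, Finset.sum_mul]
        apply Finset.sum_congr rfl; intro x _
        rw [reindexMap_apply, Matrix.submatrix_apply]
        rfl

end Identity
theorem state_tensorMap_id {ι κ : Type} [Fintype ι] [DecidableEq ι] [Fintype κ] [DecidableEq κ]
    {r : ℕ} (L : MatMap ι κ) (hL : IsChannel L) {X : Mat (Fin r × ι)} (hX : IsState X) :
    IsState (tensorMap (LinearMap.id : MatMap (Fin r) (Fin r)) L X) :=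
  ⟨hL.1 r X hX.1, (tensorMap_id_tp L hL.2 X).trans hX.2⟩

/-- the von Neumann conditional entropy of a bipartite channel is at most
the least output conditional entropy `inf_ψ S(A|RB)_{(id⊗N)(ψ)}`. -/
theorem stmt8 (a' b' a b : ℕ)
    (N : MatMap (Fin a' × Fin b') (Fin a × Fin b)) (hN : IsChannel N) :
    vnCondEnt N ≤ minOutCondEnt N := by
  rw [vnCondEnt, minOutCondEnt]
  apply le_iInf; intro r
  apply le_iInf; intro ψ
  rw [vnCondEntState, EReal.neg_le_neg_iff]
  apply le_iInf; intro M
  have hψstate := ψ.2.1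
  have hout : IsState (tensorMap (LinearMap.id : MatMap (Fin r) (Fin r)) N ψ.1) :=
    state_tensorMap_id N hN hψstate
  have hρ' : IsState (reindexMap (swapRA (Fin r) (Fin a) (Fin b))
      (tensorMap (LinearMap.id : MatMap (Fin r) (Fin r)) N ψ.1)) :=
    reindex_state _ hout
  have hτ : IsState (ptraceLeftMap (Fin a') (Fin r × Fin b')
      (reindexMap (swapRA (Fin r) (Fin a') (Fin b')) ψ.1)) :=
    ptraceLeft_state (reindex_state _ hψstate)
  have hσ : IsState (tensorMap (LinearMap.id : MatMap (Fin r) (Fin r)) M.1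
      (ptraceLeftMap (Fin a') (Fin r × Fin b')
        (reindexMap (swapRA (Fin r) (Fin a') (Fin b')) ψ.1))) :=
    state_tensorMap_id M.1 M.2 hτ
  calc relEnt (reindexMap (swapRA (Fin r) (Fin a) (Fin b))
        (tensorMap (LinearMap.id : MatMap (Fin r) (Fin r)) N ψ.1))
        ((1 : Mat (Fin a)) ⊗ₖ ptraceLeftMap (Fin a) (Fin r × Fin b)
          (reindexMap (swapRA (Fin r) (Fin a) (Fin b))
            (tensorMap (LinearMap.id : MatMap (Fin r) (Fin r)) N ψ.1)))
      ≤ relEnt (reindexMap (swapRA (Fin r) (Fin a) (Fin b))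
          (tensorMap (LinearMap.id : MatMap (Fin r) (Fin r)) N ψ.1))
          ((1 : Mat (Fin a)) ⊗ₖ tensorMap (LinearMap.id : MatMap (Fin r) (Fin r)) M.1
            (ptraceLeftMap (Fin a') (Fin r × Fin b')
              (reindexMap (swapRA (Fin r) (Fin a') (Fin b')) ψ.1))) :=
        relEnt_ptrace_le _ _ hρ' hσ
    _ = relEnt (reindexMap (swapRA (Fin r) (Fin a) (Fin b))
          (tensorMap (LinearMap.id : MatMap (Fin r) (Fin r)) N ψ.1))
          (reindexMap (swapRA (Fin r) (Fin a) (Fin b))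
            (tensorMap (LinearMap.id : MatMap (Fin r) (Fin r))
              (tensorMap (Rmap (Fin a') (Fin a)) M.1) ψ.1)) := by
        rw [rmap_tensor_identity]
    _ = relEnt (tensorMap (LinearMap.id : MatMap (Fin r) (Fin r)) N ψ.1)
          (tensorMap (LinearMap.id : MatMap (Fin r) (Fin r))
            (tensorMap (Rmap (Fin a') (Fin a)) M.1) ψ.1) :=
        relEnt_reindex _ _ _
    _ ≤ relChDiv N (tensorMap (Rmap (Fin a') (Fin a)) M.1) := by
        rw [relChDiv]
        exact le_iSup_of_le r (le_iSup_of_le ⟨ψ.1, hψstate⟩ le_rfl)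

end
end QIT
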